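/- Let Q be a unitary on (ℂ²)^{⊗n} and define Q' = Q† P_0 Q where P_0 projects the answer qubit onto |0⟩. If Q is implemented by a circuit whose graph has bubble width w, then Q' is implemented by a circuit (the circuit for Q, followed by the projection gate, followed by the adjoint circuit reflected) whose graph has bubble width at most 2w + 1. -/
import Mathlib



/-- Number of edges of `G` with exactly one endpoint in `S`
(counted as ordered pairs with the first coordinate in `S`). -/
noncomputable def cutSize {V : Type*} (G : SimpleGraph V) (S : Set V) : ℕ :=
  {p : V × V | G.Adj p.1 p.2 ∧ p.1 ∈ S ∧ p.2 ∉ S}.ncard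

/-- The prefix `{b 0, …, b i}` of an ordering of the vertices. -/
def prefixSet {V : Type*} [Fintype V] (b : Fin (Fintype.card V) ≃ V)
    (i : Fin (Fintype.card V)) : Set V :=
  {v | ∃ j, j ≤ i ∧ b j = v}

/-- The width of a bubbling (vertex ordering): max size of a prefix cut. -/
noncomputable def ordWidth {V : Type*} [Fintype V] (G : SimpleGraph V)
    (b : Fin (Fintype.card V) ≃ V) : ℕ :=
  Finset.univ.sup fun i => cutSize G (prefixSet b i)

/-- The bubble width of a finite graph. -/
noncomputable def bubbleWidth {V : Type*} [Fintype V] (G : SimpleGraph V) : ℕ :=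
  sInf (Set.range (ordWidth G))


/-- The circuit graph of `Q' = Q† P₀ Q`: two mirror copies of the circuit graph of `Q`
(the circuit and its reflected adjoint), with each output vertex `v ∈ O` joined to its
mirror image by a wire; for the answer wire this connecting edge is the projection gate. -/
def mirrorCircuit {V : Type*} (G : SimpleGraph V) (O : Set V) : SimpleGraph (V ⊕ V) :=
  SimpleGraph.fromRel (fun a c =>
    match a, c with
    | Sum.inl u, Sum.inl v => G.Adj u v
    | Sum.inr u, Sum.inr v => G.Adj u v
    | Sum.inl u, Sum.inr v => u = v ∧ u ∈ O
    | Sum.inr _, Sum.inl _ => False)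

section aux

variable {V : Type*}

lemma cut_mirror [Finite V] (G : SimpleGraph V) (O A B : Set V) (hBA : B ⊆ A) :
    cutSize (mirrorCircuit G O) (Sum.inl '' A ∪ Sum.inr '' B)
      ≤ cutSize G A + cutSize G B + (A \ B).ncard := by
  classical
  set P : Set (V ⊕ V) := Sum.inl '' A ∪ Sum.inr '' B with hP
  have hmemL : ∀ u : V, Sum.inl u ∈ P ↔ u ∈ A := by
    intro u; simp [hP]
  have hmemR : ∀ u : V, Sum.inr u ∈ P ↔ u ∈ B := by
    intro u; simp [hP]
  have hsub : {p : (V ⊕ V) × (V ⊕ V) | (mirrorCircuit G O).Adj p.1 p.2 ∧ p.1 ∈ P ∧ p.2 ∉ P}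
      ⊆ ((fun q : V × V => ((Sum.inl q.1 : V ⊕ V), (Sum.inl q.2 : V ⊕ V))) ''
            {p : V × V | G.Adj p.1 p.2 ∧ p.1 ∈ A ∧ p.2 ∉ A})
        ∪ ((fun q : V × V => ((Sum.inr q.1 : V ⊕ V), (Sum.inr q.2 : V ⊕ V))) ''
            {p : V × V | G.Adj p.1 p.2 ∧ p.1 ∈ B ∧ p.2 ∉ B})
        ∪ ((fun v : V => ((Sum.inl v : V ⊕ V), (Sum.inr v : V ⊕ V))) '' (A \ B)) := by
    rintro ⟨x, y⟩ ⟨hadj, hx, hy⟩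
    rw [mirrorCircuit, SimpleGraph.fromRel_adj] at hadj
    obtain ⟨hne, hr⟩ := hadj
    match x, y with
    | Sum.inl u, Sum.inl v =>
      have hG : G.Adj u v := by
        rcases hr with h | h
        · exact h
        · exact h.symm
      exact Or.inl (Or.inl ⟨(u, v), ⟨hG, (hmemL u).1 hx, fun h => hy ((hmemL v).2 h)⟩, rfl⟩)
    | Sum.inr u, Sum.inr v =>
      have hG : G.Adj u v := by
        rcases hr with h | h
        · exact h
        · exact h.symm
      exact Or.inl (Or.inr ⟨(u, v), ⟨hG, (hmemR u).1 hx, fun h => hy ((hmemR v).2 h)⟩, rfl⟩)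
    | Sum.inl u, Sum.inr v =>
      have huv : u = v := by
        rcases hr with h | h
        · exact h.1
        · exact False.elim h
      subst huv
      exact Or.inr ⟨u, ⟨(hmemL u).1 hx, fun h => hy ((hmemR u).2 h)⟩, rfl⟩
    | Sum.inr u, Sum.inl v =>
      have huv : u = v := by
        rcases hr with h | h
        · exact False.elim h
        · exact h.1.symm
      subst huv
      exact absurd ((hmemL u).2 (hBA ((hmemR u).1 hx))) hy
  calc cutSize (mirrorCircuit G O) P
      ≤ _ := Set.ncard_le_ncard hsub (Set.toFinite _)
    _ ≤ _ + _ := Set.ncard_union_le _ _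
    _ ≤ cutSize G A + cutSize G B + (A \ B).ncard := by
        refine Nat.add_le_add (le_trans (Set.ncard_union_le _ _) ?_) (Set.ncard_image_le (Set.toFinite _))
        exact Nat.add_le_add (Set.ncard_image_le (Set.toFinite _)) (Set.ncard_image_le (Set.toFinite _))

lemma prefixSet_eq_image [Fintype V] (b : Fin (Fintype.card V) ≃ V)
    (i : Fin (Fintype.card V)) :
    prefixSet b i = b '' {m | m.val ≤ i.val} := by
  ext v
  simp only [prefixSet, Set.mem_setOf_eq, Set.mem_image]
  constructor
  · rintro ⟨j, hj, rfl⟩; exact ⟨j, hj, rfl⟩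
  · rintro ⟨j, hj, rfl⟩; exact ⟨j, hj, rfl⟩

lemma cutSize_prefix_le [Fintype V] (G : SimpleGraph V) (b : Fin (Fintype.card V) ≃ V)
    (j : Fin (Fintype.card V)) : cutSize G (prefixSet b j) ≤ ordWidth G b := by
  exact Finset.le_sup (f := fun i => cutSize G (prefixSet b i)) (Finset.mem_univ j)

end aux

lemma cutSize_empty {V : Type*} (G : SimpleGraph V) : cutSize G (∅ : Set V) = 0 := by
  unfold cutSize
  convert Set.ncard_empty ((V × V)) using 2
  ext p; simp

/-- if the circuit of `Q` has bubble width `w`, then the circuit for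
`Q' = Q† P₀ Q` (the circuit of `Q`, the projection on the answer qubit, and the reflected
adjoint circuit) has bubble width at most `2w + 1`. -/
theorem bubbleWidth_mirrorCircuit {V : Type*} [Fintype V] [DecidableEq V]
    (G : SimpleGraph V) (O : Set V) :
    bubbleWidth (mirrorCircuit G O) ≤ 2 * bubbleWidth G + 1 := by
  classical
  obtain ⟨b, hb⟩ : ∃ b, ordWidth G b = bubbleWidth G := by
    have hne : (Set.range (ordWidth G)).Nonempty := ⟨_, ⟨(Fintype.equivFin V).symm, rfl⟩⟩
    exact Nat.sInf_mem hne
  have hcard : Fintype.card (V ⊕ V) = 2 * Fintype.card V := by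
    simp [Fintype.card_sum, two_mul]
  have hdiv : ∀ k : Fin (Fintype.card (V ⊕ V)), k.val / 2 < Fintype.card V := by
    intro k; have h1 := k.isLt; omega
  set f : Fin (Fintype.card (V ⊕ V)) → V ⊕ V := fun k =>
    if k.val % 2 = 0 then Sum.inl (b ⟨k.val / 2, hdiv k⟩) else Sum.inr (b ⟨k.val / 2, hdiv k⟩)
    with hf
  have hinj : Function.Injective f := by
    intro k k' h
    simp only [hf] at h
    split_ifs at h with h1 h2 h2 <;>
      first
      | exact (Sum.inl_ne_inr h).elim
      | exact (Sum.inr_ne_inl h).elim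
      | (have h4 : k.val / 2 = k'.val / 2 := by
           first
           | exact congrArg Fin.val (b.injective (Sum.inl.inj h))
           | exact congrArg Fin.val (b.injective (Sum.inr.inj h))
         exact Fin.ext (by omega))
  have hbij : Function.Bijective f :=
    (Fintype.bijective_iff_injective_and_card f).2 ⟨hinj, by simp⟩
  set b' : Fin (Fintype.card (V ⊕ V)) ≃ (V ⊕ V) := Equiv.ofBijective f hbij with hb'
  have hb'app : ∀ k, b' k = f k := fun k => rfl
  have key : ∀ i, cutSize (mirrorCircuit G O) (prefixSet b' i) ≤ 2 * bubbleWidth G + 1 := by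
    intro i
    set S₁ : Set (Fin (Fintype.card V)) := {m | 2 * m.val ≤ i.val} with hS₁
    set S₂ : Set (Fin (Fintype.card V)) := {m | 2 * m.val + 1 ≤ i.val} with hS₂
    have hpre : prefixSet b' i = Sum.inl '' (b '' S₁) ∪ Sum.inr '' (b '' S₂) := by
      ext x
      simp only [prefixSet, Set.mem_setOf_eq, Set.mem_union, Set.mem_image]
      constructor
      · rintro ⟨j, hj, rfl⟩
        rw [hb'app]
        simp only [hf]
        have hj' : j.val ≤ i.val := hj
        split_ifs with hpar
        · exact Or.inl ⟨b ⟨j.val / 2, hdiv j⟩,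
            ⟨⟨j.val / 2, hdiv j⟩, by simp only [hS₁, Set.mem_setOf_eq]; omega, rfl⟩, rfl⟩
        · exact Or.inr ⟨b ⟨j.val / 2, hdiv j⟩,
            ⟨⟨j.val / 2, hdiv j⟩, by simp only [hS₂, Set.mem_setOf_eq]; omega, rfl⟩, rfl⟩
      · rintro (⟨v, ⟨m, hm, rfl⟩, rfl⟩ | ⟨v, ⟨m, hm, rfl⟩, rfl⟩)
        · simp only [hS₁, Set.mem_setOf_eq] at hm
          refine ⟨⟨2 * m.val, by rw [hcard]; have := m.isLt; omega⟩, hm, ?_⟩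
          rw [hb'app]; simp only [hf]
          rw [if_pos (show (2 * m.val) % 2 = 0 by omega)]
          exact congrArg (fun m => Sum.inl (b m)) (Fin.ext (show (2 * m.val) / 2 = m.val by omega))
        · simp only [hS₂, Set.mem_setOf_eq] at hm
          refine ⟨⟨2 * m.val + 1, by rw [hcard]; have := m.isLt; omega⟩, hm, ?_⟩
          rw [hb'app]; simp only [hf]
          rw [if_neg (show ¬ (2 * m.val + 1) % 2 = 0 by omega)]
          exact congrArg (fun m => Sum.inr (b m)) (Fin.ext (show (2 * m.val + 1) / 2 = m.val by omega))
    rw [hpre]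
    have h1 : cutSize G (b '' S₁) ≤ bubbleWidth G := by
      have he : b '' S₁ = prefixSet b ⟨i.val / 2, hdiv i⟩ := by
        rw [prefixSet_eq_image]
        refine congrArg (Set.image (⇑b)) ?_
        ext m
        show 2 * m.val ≤ i.val ↔ m.val ≤ i.val / 2
        omega
      rw [he, ← hb]
      exact cutSize_prefix_le G b _
    have h2 : cutSize G (b '' S₂) ≤ bubbleWidth G := by
      rcases Nat.eq_zero_or_pos i.val with h0 | h0
      · have hempty : b '' S₂ = ∅ := by
          have hS : S₂ = ∅ := by
            ext m
            show 2 * m.val + 1 ≤ i.val ↔ False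
            simp only [iff_false]
            omega
          rw [hS]
          exact Set.image_empty _
        rw [hempty, cutSize_empty]
        exact Nat.zero_le _
      · have he : b '' S₂ = prefixSet b ⟨(i.val - 1) / 2, by have := hdiv i; omega⟩ := by
          rw [prefixSet_eq_image]
          refine congrArg (Set.image (⇑b)) ?_
          ext m
          show 2 * m.val + 1 ≤ i.val ↔ m.val ≤ (i.val - 1) / 2
          omega
        rw [he, ← hb]
        exact cutSize_prefix_le G b _
    have h3 : (b '' S₁ \ b '' S₂).ncard ≤ 1 := by
      have hsub : b '' S₁ \ b '' S₂ ⊆ {b ⟨i.val / 2, hdiv i⟩} := by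
        rintro v ⟨⟨m, hm, rfl⟩, hnot⟩
        have hm2 : ¬ (2 * m.val + 1 ≤ i.val) := fun h => hnot ⟨m, h, rfl⟩
        simp only [hS₁, Set.mem_setOf_eq] at hm
        have hmeq : m = ⟨i.val / 2, hdiv i⟩ := Fin.ext (show m.val = i.val / 2 by omega)
        simp [hmeq]
      calc _ ≤ ({b ⟨i.val / 2, hdiv i⟩} : Set V).ncard :=
            Set.ncard_le_ncard hsub (Set.toFinite _)
        _ = 1 := Set.ncard_singleton _
    calc cutSize (mirrorCircuit G O) _
        ≤ cutSize G (b '' S₁) + cutSize G (b '' S₂) + (b '' S₁ \ b '' S₂).ncard :=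
          cut_mirror G O _ _ (Set.image_mono (fun m hm => by
            simp only [hS₁, hS₂, Set.mem_setOf_eq] at *; omega))
      _ ≤ bubbleWidth G + bubbleWidth G + 1 := Nat.add_le_add (Nat.add_le_add h1 h2) h3
      _ = 2 * bubbleWidth G + 1 := by ring
  have hle : ordWidth (mirrorCircuit G O) b' ≤ 2 * bubbleWidth G + 1 :=
    Finset.sup_le fun i _ => key i
  exact le_trans (Nat.sInf_le ⟨b', rfl⟩) hle
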